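/- Let n ≥ 1, let A ∈ ℂ^{n×n} be Hermitian, let a ∈ ℂ^n, let α ∈ ℝ, and let ε > 0. If Re(xᴴAx) + 2·Re(aᴴx) + α ≤ 0 for every x ∈ ℂ^n with ‖x‖² ≤ ε², then there exists a real number λ ≥ 0 such that the (n+1)×(n+1) Hermitian matrix λ·[[I_n, 0], [0, −ε²]] − [[A, a], [aᴴ, α]] is positive semidefinite. -/

import Mathlib

open Matrix
open scoped ComplexOrder

/-- The `(n+1)×(n+1)` Hermitian block matrix `[[A, a], [aᴴ, α]]`. -/
noncomputable def sBlock {n : ℕ} (A : Matrix (Fin n) (Fin n) ℂ) (a : Fin n → ℂ) (α : ℝ) :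
    Matrix (Fin n ⊕ Fin 1) (Fin n ⊕ Fin 1) ℂ :=
  Matrix.fromBlocks A (Matrix.of fun i _ => a i) (Matrix.of fun _ j => star (a j))
    (Matrix.of fun _ _ => (α : ℂ))

set_option linter.unusedSectionVars false
set_option maxHeartbeats 1000000

section Aux

variable {ι : Type*} [Fintype ι] [DecidableEq ι]

noncomputable def qf (P : Matrix ι ι ℂ) (v : ι → ℂ) : ℝ := (star v ⬝ᵥ (P *ᵥ v)).re

lemma qf_one (v : ι → ℂ) : qf 1 v = ∑ i, Complex.normSq (v i) := by
  rw [qf, one_mulVec, dotProduct, Complex.re_sum]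
  refine Finset.sum_congr rfl fun i _ => ?_
  simp [Complex.normSq_apply]

lemma qf_one_nonneg (v : ι → ℂ) : 0 ≤ qf 1 v := by
  rw [qf_one]
  exact Finset.sum_nonneg fun i _ => Complex.normSq_nonneg _

lemma qf_zero (P : Matrix ι ι ℂ) : qf P 0 = 0 := by simp [qf]

lemma star_form (P : Matrix ι ι ℂ) (hP : P.IsHermitian) (x y : ι → ℂ) :
    star (star x ⬝ᵥ (P *ᵥ y)) = star y ⬝ᵥ (P *ᵥ x) := by
  rw [star_dotProduct, star_star, star_mulVec, dotProduct_mulVec, hP.eq, dotProduct_comm]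

lemma qf_expand (P : Matrix ι ι ℂ) (hP : P.IsHermitian) (c d : ℝ) (x y : ι → ℂ) :
    qf P ((c:ℂ) • x + (d:ℂ) • y)
      = c^2 * qf P x + d^2 * qf P y + 2*c*d * (star x ⬝ᵥ (P *ᵥ y)).re := by
  have key : star ((c:ℂ) • x + (d:ℂ) • y) ⬝ᵥ (P *ᵥ ((c:ℂ) • x + (d:ℂ) • y))
      = (c:ℂ)^2 * (star x ⬝ᵥ (P *ᵥ x)) + (d:ℂ)^2 * (star y ⬝ᵥ (P *ᵥ y))
        + (c:ℂ)*(d:ℂ) * (star x ⬝ᵥ (P *ᵥ y) + star y ⬝ᵥ (P *ᵥ x)) := by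
    simp [star_add, star_smul, mulVec_add, mulVec_smul, dotProduct_add, add_dotProduct,
      smul_dotProduct, dotProduct_smul, Complex.star_def, Complex.conj_ofReal,
      smul_eq_mul]
    ring
  have h2 : star x ⬝ᵥ (P *ᵥ y) + star y ⬝ᵥ (P *ᵥ x)
      = ((2 * (star x ⬝ᵥ (P *ᵥ y)).re : ℝ) : ℂ) := by
    rw [← star_form P hP x y, Complex.star_def, Complex.add_conj]
  simp only [qf]
  rw [key, h2]
  simp only [← Complex.ofReal_pow, ← Complex.ofReal_mul, Complex.add_re,
    Complex.re_ofReal_mul, Complex.ofReal_re]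
  ring

lemma qf_real_smul (P : Matrix ι ι ℂ) (c : ℝ) (x : ι → ℂ) :
    qf P ((c:ℂ) • x) = c^2 * qf P x := by
  simp only [qf, star_smul, mulVec_smul, dotProduct_smul, smul_dotProduct,
    Complex.star_def, Complex.conj_ofReal, smul_eq_mul]
  rw [← mul_assoc, ← Complex.ofReal_mul, Complex.re_ofReal_mul, ← sq]

lemma qf_unit_smul (P : Matrix ι ι ℂ) (z : ℂ) (hz : Complex.normSq z = 1) (x : ι → ℂ) :
    qf P (z • x) = qf P x := by
  simp only [qf, star_smul, mulVec_smul, dotProduct_smul, smul_dotProduct, smul_eq_mul]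
  rw [Complex.star_def, ← mul_assoc, Complex.mul_conj, hz]
  simp


-- linear combination matrix facts
lemma qf_combo (P Q : Matrix ι ι ℂ) (μ ν γ : ℝ) (u : ι → ℂ) :
    qf ((μ:ℂ) • P + (ν:ℂ) • Q - (γ:ℂ) • 1) u = μ * qf P u + ν * qf Q u - γ * qf 1 u := by
  simp only [qf, sub_mulVec, add_mulVec, smul_mulVec, dotProduct_sub, dotProduct_add,
    dotProduct_smul, smul_eq_mul, Complex.sub_re, Complex.add_re, Complex.re_ofReal_mul]

lemma B_combo (P Q : Matrix ι ι ℂ) (μ ν γ : ℝ) (x y : ι → ℂ) :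
    star x ⬝ᵥ (((μ:ℂ) • P + (ν:ℂ) • Q - (γ:ℂ) • 1) *ᵥ y)
      = (μ:ℂ) * (star x ⬝ᵥ (P *ᵥ y)) + (ν:ℂ) * (star x ⬝ᵥ (Q *ᵥ y)) - (γ:ℂ) * (star x ⬝ᵥ y) := by
  simp only [sub_mulVec, add_mulVec, smul_mulVec, dotProduct_sub, dotProduct_add,
    dotProduct_smul, smul_eq_mul, one_mulVec]

lemma herm_combo (P Q : Matrix ι ι ℂ) (hP : P.IsHermitian) (hQ : Q.IsHermitian) (μ ν γ : ℝ) :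
    ((μ:ℂ) • P + (ν:ℂ) • Q - (γ:ℂ) • 1).IsHermitian := by
  unfold Matrix.IsHermitian
  rw [conjTranspose_sub, conjTranspose_add, conjTranspose_smul, conjTranspose_smul,
    conjTranspose_smul, hP.eq, hQ.eq, conjTranspose_one]
  simp [Complex.star_def, Complex.conj_ofReal]

theorem th_convex (P Q : Matrix ι ι ℂ) (hP : P.IsHermitian) (hQ : Q.IsHermitian) :
    Convex ℝ {p : ℝ × ℝ | ∃ v, qf 1 v = 1 ∧ p = (qf P v, qf Q v)} := by
  rintro a ⟨v, hv1, rfl⟩ b ⟨w, hw1, rfl⟩ s t hs ht hst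
  by_cases hab : (qf P v, qf Q v) = (qf P w, qf Q w)
  · exact ⟨v, hv1, by rw [← hab, ← add_smul, hst, one_smul]⟩
  -- main case
  set d1 : ℝ := qf P w - qf P v with hd1
  set d2 : ℝ := qf Q w - qf Q v with hd2
  have hdne : d1 ^ 2 + d2 ^ 2 ≠ 0 := by
    intro h
    have h1 : d1 = 0 := by nlinarith [sq_nonneg d1, sq_nonneg d2]
    have h2 : d2 = 0 := by nlinarith [sq_nonneg d1, sq_nonneg d2]
    apply hab
    rw [hd1] at h1
    rw [hd2] at h2
    rw [Prod.ext_iff]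
    constructor <;> [skip; skip] <;> dsimp <;> linarith
  set gam : ℝ := -d2 * qf P v + d1 * qf Q v with hgam
  set R : Matrix ι ι ℂ := ((-d2 : ℝ) : ℂ) • P + ((d1 : ℝ) : ℂ) • Q - (gam:ℂ) • 1 with hR
  have hermR : R.IsHermitian := herm_combo P Q hP hQ (-d2) d1 gam
  have qfR : ∀ u : ι → ℂ, qf R u = -d2 * qf P u + d1 * qf Q u - gam * qf 1 u :=
    fun u => qf_combo P Q (-d2) d1 gam u
  have hRv : qf R v = 0 := by rw [qfR, hv1, hgam]; ring
  have hRw : qf R w = 0 := by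
    rw [qfR, hw1, hgam, hd1, hd2]; ring
  -- phase choice
  set beta : ℂ := star v ⬝ᵥ (R *ᵥ w) with hbeta
  obtain ⟨z, hznorm, hzbeta, hzr⟩ :
      ∃ z : ℂ, Complex.normSq z = 1 ∧ (z * beta).re = 0 ∧
        0 ≤ (z * (star v ⬝ᵥ w)).re := by
    obtain ⟨z1, hz1n, hz1b⟩ : ∃ z1 : ℂ, Complex.normSq z1 = 1 ∧ (z1 * beta).re = 0 := by
      by_cases hb : beta = 0
      · exact ⟨1, by simp, by simp [hb]⟩
      · refine ⟨Complex.I * (starRingEnd ℂ beta) / ((‖beta‖ : ℝ) : ℂ), ?_, ?_⟩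
        · rw [Complex.normSq_div, Complex.normSq_mul, Complex.normSq_I,
            Complex.normSq_conj, Complex.normSq_ofReal, one_mul, ← Complex.sq_norm, ← sq]
          exact div_self (pow_ne_zero 2 (norm_ne_zero_iff.mpr hb))
        · have habs : ((‖beta‖ : ℝ) : ℂ) ≠ 0 := by
            simpa using fun h => hb (norm_eq_zero.mp h)
          have key : Complex.I * (starRingEnd ℂ beta) / ((‖beta‖ : ℝ) : ℂ) * beta
              = Complex.I * ((‖beta‖ : ℝ) : ℂ) := by
            rw [div_mul_eq_mul_div, mul_assoc, ← Complex.normSq_eq_conj_mul_self,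
              ← Complex.sq_norm]
            push_cast
            field_simp
          rw [key]
          simp [Complex.mul_re]
    rcases le_total 0 ((z1 * (star v ⬝ᵥ w)).re) with h | h
    · exact ⟨z1, hz1n, hz1b, h⟩
    · refine ⟨-z1, by simpa using hz1n, by rw [neg_mul, Complex.neg_re, hz1b, neg_zero], ?_⟩
      rw [neg_mul, Complex.neg_re]
      linarith
  set w' : ι → ℂ := z • w with hw'
  have hw'1 : qf 1 w' = 1 := by rw [hw', qf_unit_smul 1 z hznorm, hw1]
  have hw'P : qf P w' = qf P w := qf_unit_smul P z hznorm w
  have hw'Q : qf Q w' = qf Q w := qf_unit_smul Q z hznorm w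
  have hw'R : qf R w' = 0 := by rw [hw', qf_unit_smul R z hznorm, hRw]
  have hBR : (star v ⬝ᵥ (R *ᵥ w')).re = 0 := by
    rw [hw', mulVec_smul, dotProduct_smul, smul_eq_mul]; exact hzbeta
  have hB1 : (star v ⬝ᵥ ((1 : Matrix ι ι ℂ) *ᵥ w')).re = (z * (star v ⬝ᵥ w)).re := by
    rw [one_mulVec, hw', dotProduct_smul, smul_eq_mul]
  set r : ℝ := (z * (star v ⬝ᵥ w)).re with hr
  set pathv : ℝ → (ι → ℂ) :=
    fun τ => ((Real.cos τ : ℝ):ℂ) • v + ((Real.sin τ : ℝ):ℂ) • w' with hpath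
  have hqP : ∀ τ, qf P (pathv τ) = (Real.cos τ)^2 * qf P v + (Real.sin τ)^2 * qf P w
      + 2*(Real.cos τ)*(Real.sin τ)*(star v ⬝ᵥ (P *ᵥ w')).re := by
    intro τ
    rw [hpath]
    rw [qf_expand P hP, hw'P]
  have hqQ : ∀ τ, qf Q (pathv τ) = (Real.cos τ)^2 * qf Q v + (Real.sin τ)^2 * qf Q w
      + 2*(Real.cos τ)*(Real.sin τ)*(star v ⬝ᵥ (Q *ᵥ w')).re := by
    intro τ
    rw [hpath]
    rw [qf_expand Q hQ, hw'Q]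
  have hqN : ∀ τ, qf 1 (pathv τ) = 1 + 2*(Real.cos τ)*(Real.sin τ)*r := by
    intro τ
    rw [hpath, qf_expand 1 Matrix.isHermitian_one, hv1, hw'1, hB1]
    linarith [Real.sin_sq_add_cos_sq τ]
  have hqR : ∀ τ, qf R (pathv τ) = 0 := by
    intro τ
    rw [hpath, qf_expand R hermR, hRv, hw'R, hBR]
    ring
  have hNpos : ∀ τ ∈ Set.Icc (0:ℝ) (Real.pi/2), (1:ℝ) ≤ qf 1 (pathv τ) := by
    intro τ hτ
    rw [hqN]
    have hc : 0 ≤ Real.cos τ := Real.cos_nonneg_of_mem_Icc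
      ⟨by linarith [hτ.1, Real.pi_pos], hτ.2⟩
    have hs' : 0 ≤ Real.sin τ := Real.sin_nonneg_of_nonneg_of_le_pi hτ.1
      (by linarith [hτ.2, Real.pi_pos])
    nlinarith [mul_nonneg (mul_nonneg hc hs') hzr]
  set m : ℝ → ℝ :=
    fun τ => (d1 * qf P (pathv τ) + d2 * qf Q (pathv τ)) / qf 1 (pathv τ) with hm
  have hpi2 : (0:ℝ) ≤ Real.pi/2 := by positivity
  have hcont : ContinuousOn m (Set.uIcc 0 (Real.pi/2)) := by
    rw [Set.uIcc_of_le hpi2]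
    have eP : (fun τ => qf P (pathv τ)) = fun τ => (Real.cos τ)^2 * qf P v
        + (Real.sin τ)^2 * qf P w
        + 2*(Real.cos τ)*(Real.sin τ)*(star v ⬝ᵥ (P *ᵥ w')).re := funext hqP
    have eQ : (fun τ => qf Q (pathv τ)) = fun τ => (Real.cos τ)^2 * qf Q v
        + (Real.sin τ)^2 * qf Q w
        + 2*(Real.cos τ)*(Real.sin τ)*(star v ⬝ᵥ (Q *ᵥ w')).re := funext hqQ
    have eN : (fun τ => qf 1 (pathv τ)) = fun τ =>
        1 + 2*(Real.cos τ)*(Real.sin τ)*r := funext hqN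
    apply ContinuousOn.div
    · apply Continuous.continuousOn
      have : (fun τ => d1 * qf P (pathv τ) + d2 * qf Q (pathv τ))
          = fun τ => d1 * ((Real.cos τ)^2 * qf P v + (Real.sin τ)^2 * qf P w
            + 2*(Real.cos τ)*(Real.sin τ)*(star v ⬝ᵥ (P *ᵥ w')).re)
            + d2 * ((Real.cos τ)^2 * qf Q v + (Real.sin τ)^2 * qf Q w
            + 2*(Real.cos τ)*(Real.sin τ)*(star v ⬝ᵥ (Q *ᵥ w')).re) := by
        funext τ
        rw [hqP, hqQ]
      rw [this]
      fun_prop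
    · apply Continuous.continuousOn
      rw [eN]
      fun_prop
    · intro τ hτ
      have := hNpos τ hτ
      linarith
  have hm0 : m 0 = d1 * qf P v + d2 * qf Q v := by
    have h0 : pathv 0 = v := by
      rw [hpath]
      simp
    simp only [hm]
    rw [h0, hv1, div_one]
  have hmh : m (Real.pi/2) = d1 * qf P w + d2 * qf Q w := by
    have h0 : pathv (Real.pi/2) = w' := by
      rw [hpath]
      simp
    simp only [hm]
    rw [h0, hw'1, hw'P, hw'Q, div_one]
  set T : ℝ := d1 * (s * qf P v + t * qf P w) + d2 * (s * qf Q v + t * qf Q w) with hT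
  have hTmem : T ∈ Set.uIcc (m 0) (m (Real.pi/2)) := by
    have hs1 : s = 1 - t := by linarith
    have ht1 : (0:ℝ) ≤ 1 - t := by linarith
    rw [hm0, hmh, Set.mem_uIcc, hT, hs1]
    rcases le_total (d1 * qf P v + d2 * qf Q v) (d1 * qf P w + d2 * qf Q w) with h | h
    · left
      constructor <;>
        nlinarith [mul_le_mul_of_nonneg_left h ht, mul_le_mul_of_nonneg_left h ht1]
    · right
      constructor <;>
        nlinarith [mul_le_mul_of_nonneg_left h ht, mul_le_mul_of_nonneg_left h ht1]
  obtain ⟨τ, hτmem, hτT⟩ := intermediate_value_uIcc hcont hTmem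
  rw [Set.uIcc_of_le hpi2] at hτmem
  have hNτ : 1 ≤ qf 1 (pathv τ) := hNpos τ hτmem
  have hNτpos : 0 < qf 1 (pathv τ) := lt_of_lt_of_le one_pos hNτ
  set ρ : ℝ := (Real.sqrt (qf 1 (pathv τ)))⁻¹ with hρ
  have hρsq : ρ^2 * qf 1 (pathv τ) = 1 := by
    rw [hρ, inv_pow, Real.sq_sqrt hNτpos.le]
    exact inv_mul_cancel₀ (ne_of_gt hNτpos)
  set vstar : ι → ℂ := ((ρ:ℝ):ℂ) • pathv τ with hvstar
  have hvs1 : qf 1 vstar = 1 := by rw [hvstar, qf_real_smul]; exact hρsq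
  have hX : qf P vstar = ρ^2 * qf P (pathv τ) := qf_real_smul P ρ _
  have hY : qf Q vstar = ρ^2 * qf Q (pathv τ) := qf_real_smul Q ρ _
  have hnum : d1 * qf P (pathv τ) + d2 * qf Q (pathv τ) = T * qf 1 (pathv τ) := by
    rw [hm] at hτT
    field_simp at hτT
    linarith [hτT]
  have eq1 : d1 * qf P vstar + d2 * qf Q vstar = T := by
    rw [hX, hY]
    linear_combination ρ^2 * hnum + T * hρsq
  have eq2 : -d2 * qf P vstar + d1 * qf Q vstar = gam := by
    have h0 : qf R vstar = 0 := by
      rw [hvstar, qf_real_smul, hqR, mul_zero]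
    rw [qfR, hvs1] at h0
    linarith
  have hv2 : -d2 * qf P v + d1 * qf Q v = gam := by rw [hgam]
  have hw2 : -d2 * qf P w + d1 * qf Q w = gam := by
    have h0 := hRw
    rw [qfR, hw1] at h0
    linarith
  set c1 : ℝ := s * qf P v + t * qf P w with hc1def
  set c2 : ℝ := s * qf Q v + t * qf Q w with hc2def
  have hc1 : d1 * c1 + d2 * c2 = T := by rw [hT, hc1def, hc2def]
  have hc2 : -d2 * c1 + d1 * c2 = gam := by
    rw [hc1def, hc2def]
    linear_combination s * hv2 + t * hw2 + gam * hst
  have hX1 : qf P vstar = c1 := by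
    have h5 : (d1^2 + d2^2) * qf P vstar = (d1^2 + d2^2) * c1 := by
      linear_combination d1 * eq1 - d2 * eq2 - d1 * hc1 + d2 * hc2
    exact mul_left_cancel₀ hdne h5
  have hY1 : qf Q vstar = c2 := by
    have h5 : (d1^2 + d2^2) * qf Q vstar = (d1^2 + d2^2) * c2 := by
      linear_combination d2 * eq1 + d1 * eq2 - d2 * hc1 - d1 * hc2
    exact mul_left_cancel₀ hdne h5
  refine ⟨vstar, hvs1, ?_⟩
  rw [Prod.ext_iff]
  constructor
  · simp [hX1, hc1def]
  · simp [hY1, hc2def]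


theorem slem_core (P Q : Matrix ι ι ℂ) (hP : P.IsHermitian) (hQ : Q.IsHermitian)
    (h : ∀ v : ι → ℂ, qf Q v ≤ 0 → qf P v ≤ 0)
    (v0 : ι → ℂ) (hv01 : qf 1 v0 = 1) (hv0 : qf Q v0 < 0) :
    ∃ l : ℝ, 0 ≤ l ∧ ∀ v : ι → ℂ, qf P v ≤ l * qf Q v := by
  set W : Set (ℝ × ℝ) := {p | ∃ v, qf 1 v = 1 ∧ p = (qf P v, qf Q v)} with hW
  set C : Set (ℝ × ℝ) := Set.Ioi (0:ℝ) ×ˢ Set.Iio (0:ℝ) with hC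
  have hCopen : IsOpen C := (isOpen_Ioi).prod (isOpen_Iio)
  have hCconv : Convex ℝ C := (convex_Ioi (0:ℝ)).prod (convex_Iio (0:ℝ))
  have hWconv : Convex ℝ W := th_convex P Q hP hQ
  have hdisj : Disjoint C W := by
    rw [Set.disjoint_left]
    rintro p hpC ⟨v, hv1, rfl⟩
    have h1 : 0 < qf P v := hpC.1
    have h2 : qf Q v < 0 := hpC.2
    linarith [h v h2.le]
  obtain ⟨f, u, hfC, hfW⟩ := geometric_hahn_banach_open hCconv hCopen hWconv hdisj
  set μ : ℝ := f (1, 0) with hμ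
  set ν : ℝ := f (0, 1) with hν
  have hf : ∀ p : ℝ × ℝ, f p = p.1 * μ + p.2 * ν := by
    intro p
    have hp : p = p.1 • ((1:ℝ), (0:ℝ)) + p.2 • ((0:ℝ), (1:ℝ)) := by
      simp [Prod.ext_iff]
    conv_lhs => rw [hp]
    rw [map_add, _root_.map_smul, _root_.map_smul, smul_eq_mul, smul_eq_mul]
  -- μ ≤ 0
  have hμ0 : μ ≤ 0 := by
    by_contra hcon
    push_neg at hcon
    set s0 : ℝ := max 1 ((u + ν + 1)/μ) with hs0
    have hs0pos : 0 < s0 := lt_of_lt_of_le one_pos (le_max_left _ _)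
    have hmem : (s0, (-1:ℝ)) ∈ C := by
      constructor
      · exact hs0pos
      · norm_num
    have := hfC _ hmem
    rw [hf] at this
    simp only at this
    have h2 : (u + ν + 1)/μ ≤ s0 := le_max_right _ _
    have h3 : u + ν + 1 ≤ s0 * μ := by
      rw [div_le_iff₀ hcon] at h2
      linarith
    nlinarith
  -- ν ≥ 0
  have hν0 : 0 ≤ ν := by
    by_contra hcon
    push_neg at hcon
    set s0 : ℝ := max 1 ((u - μ + 1)/(-ν)) with hs0
    have hs0pos : 0 < s0 := lt_of_lt_of_le one_pos (le_max_left _ _)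
    have hmem : ((1:ℝ), -s0) ∈ C := by
      constructor
      · norm_num
      · simpa using hs0pos
    have := hfC _ hmem
    rw [hf] at this
    simp only at this
    have h2 : (u - μ + 1)/(-ν) ≤ s0 := le_max_right _ _
    have h3 : u - μ + 1 ≤ s0 * (-ν) := by
      rw [div_le_iff₀ (by linarith)] at h2
      linarith
    nlinarith
  -- u nonneg
  have hu0 : 0 ≤ u := by
    by_contra hcon
    push_neg at hcon
    have hden : (0:ℝ) < 2*(ν-μ)+1 := by linarith
    set δ : ℝ := -u/(2*(ν-μ)+1) with hδdef
    have hδpos : 0 < δ := div_pos (by linarith) hden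
    have hmem : (δ, -δ) ∈ C := by
      constructor
      · exact hδpos
      · simp only [Set.mem_Iio]; linarith
    have h3 := hfC _ hmem
    rw [hf] at h3
    simp only at h3
    have hδmul : δ * (2*(ν-μ)+1) = -u := div_mul_cancel₀ _ (ne_of_gt hden)
    nlinarith [mul_lt_mul_of_pos_right h3 hden]
  -- main inequality on unit vectors
  have hunit : ∀ v : ι → ℂ, qf 1 v = 1 → 0 ≤ qf P v * μ + qf Q v * ν := by
    intro v hv1
    have : u ≤ f (qf P v, qf Q v) := hfW _ ⟨v, hv1, rfl⟩
    rw [hf] at this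
    simp only at this
    linarith
  -- μ < 0
  have hμneg : μ < 0 := by
    rcases lt_or_eq_of_le hμ0 with h' | h'
    · exact h'
    · exfalso
      have hν' : 0 < ν := by
        rcases lt_or_eq_of_le hν0 with h'' | h''
        · exact h''
        · exfalso
          -- f = 0
          have h0 := hfC _ (show ((1:ℝ), (-1:ℝ)) ∈ C by constructor <;> norm_num)
          rw [hf] at h0
          have h1 := hfW _ ⟨v0, hv01, rfl⟩
          rw [hf] at h1
          simp only at h0 h1
          rw [h', ← h''] at h0 h1
          nlinarith
      have := hunit v0 hv01
      rw [h'] at this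
      nlinarith [mul_pos hν' (neg_pos.mpr hv0), mul_pos (neg_pos.mpr hv0) hν']
  -- conclusion
  refine ⟨ν / (-μ), div_nonneg hν0 (by linarith), ?_⟩
  intro v
  by_cases hv : qf 1 v = 0
  · -- v = 0 quadratic forms vanish... need qf P v = 0 when qf 1 v = 0
    have hvz : v = 0 := by
      have hsum := qf_one v
      rw [hv] at hsum
      funext i
      have hterm : Complex.normSq (v i) = 0 := by
        have hle : Complex.normSq (v i) ≤ 0 := by
          have := Finset.sum_nonneg (fun j (_ : j ∈ Finset.univ) => Complex.normSq_nonneg (v j))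
          have hmem : i ∈ Finset.univ := Finset.mem_univ i
          have := Finset.single_le_sum (fun j (_ : j ∈ Finset.univ) => Complex.normSq_nonneg (v j)) hmem
          linarith
        linarith [Complex.normSq_nonneg (v i)]
      exact Complex.normSq_eq_zero.mp hterm
    rw [hvz, qf_zero, qf_zero]
    simp
  · have hpos : 0 < qf 1 v := lt_of_le_of_ne (qf_one_nonneg v) (Ne.symm hv)
    set ρ : ℝ := (Real.sqrt (qf 1 v))⁻¹ with hρ
    have hρpos : 0 < ρ := by positivity
    have hρsq : ρ^2 * qf 1 v = 1 := by
      rw [hρ, inv_pow, Real.sq_sqrt hpos.le]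
      exact inv_mul_cancel₀ (ne_of_gt hpos)
    have h1 : qf 1 ((ρ:ℂ) • v) = 1 := by rw [qf_real_smul]; exact hρsq
    have := hunit _ h1
    rw [qf_real_smul P, qf_real_smul Q] at this
    have hρ2pos : 0 < ρ^2 := by positivity
    rw [div_mul_eq_mul_div, le_div_iff₀ (by linarith : (0:ℝ) < -μ)]
    nlinarith


lemma qf_csmul (P : Matrix ι ι ℂ) (z : ℂ) (x : ι → ℂ) :
    qf P (z • x) = Complex.normSq z * qf P x := by
  simp only [qf, star_smul, mulVec_smul, dotProduct_smul, smul_dotProduct, smul_eq_mul]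
  rw [Complex.star_def, ← mul_assoc, Complex.mul_conj, Complex.re_ofReal_mul]

-- Hermitian-ness of sBlock
lemma sBlock_isHermitian {n : ℕ} (A : Matrix (Fin n) (Fin n) ℂ) (hA : A.IsHermitian)
    (a : Fin n → ℂ) (α : ℝ) : (sBlock A a α).IsHermitian := by
  unfold Matrix.IsHermitian sBlock
  rw [Matrix.fromBlocks_conjTranspose]
  apply Matrix.ext
  rintro (i | i) (j | j)
  · simp only [Matrix.fromBlocks_apply₁₁]
    exact congrFun (congrFun hA.eq i) j
  · simp [Matrix.conjTranspose_apply]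
  · simp [Matrix.conjTranspose_apply]
  · simp [Matrix.conjTranspose_apply, Complex.conj_ofReal]

-- block quadratic form formula
lemma sBlock_qf {n : ℕ} (A : Matrix (Fin n) (Fin n) ℂ) (a : Fin n → ℂ) (α : ℝ)
    (v : Fin n ⊕ Fin 1 → ℂ) :
    qf (sBlock A a α) v = qf A (v ∘ Sum.inl)
      + 2 * ((starRingEnd ℂ) (v (Sum.inr 0)) * (star a ⬝ᵥ (v ∘ Sum.inl))).re
      + α * Complex.normSq (v (Sum.inr 0)) := by
  set x : Fin n → ℂ := v ∘ Sum.inl with hx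
  set y : Fin 1 → ℂ := fun j => v (Sum.inr j) with hy
  have hv : v = Sum.elim x y := by
    funext i
    cases i <;> rfl
  have hsy : y 0 = v (Sum.inr 0) := rfl
  have hstar : star (Sum.elim x y) = Sum.elim (star x) (star y) := by
    funext i
    cases i <;> rfl
  have hB : (Matrix.of fun i (_ : Fin 1) => a i) *ᵥ y = (y 0) • a := by
    funext i
    simp [Matrix.mulVec, dotProduct, mul_comm]
  have hC : (Matrix.of fun (_ : Fin 1) j => star (a j)) *ᵥ x = fun _ => star a ⬝ᵥ x := by
    funext j
    simp [Matrix.mulVec, dotProduct]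
  have hD : (Matrix.of fun (_ : Fin 1) (_ : Fin 1) => (α:ℂ)) *ᵥ y = fun _ => (α:ℂ) * y 0 := by
    funext j
    simp [Matrix.mulVec, dotProduct]
  rw [hv, qf, sBlock, Matrix.fromBlocks_mulVec, hstar, sumElim_dotProduct_sumElim]
  simp only [Sum.elim_comp_inl, Sum.elim_comp_inr, Sum.elim_inr]
  rw [hB, hC, hD]
  have hconj : (starRingEnd ℂ) (star a ⬝ᵥ x) = star x ⬝ᵥ a := by
    rw [← Complex.star_def, star_dotProduct, star_star, dotProduct_comm]
  have e1 : star x ⬝ᵥ (A *ᵥ x + (y 0) • a)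
      = star x ⬝ᵥ (A *ᵥ x) + y 0 * (star x ⬝ᵥ a) := by
    rw [dotProduct_add, dotProduct_smul, smul_eq_mul]
  have e2 : star y ⬝ᵥ ((fun _ => star a ⬝ᵥ x) + fun _ => (α:ℂ) * y 0)
      = star (y 0) * (star a ⬝ᵥ x) + star (y 0) * ((α:ℂ) * y 0) := by
    simp [dotProduct, Pi.add_apply, mul_add]
  rw [e1, e2]
  have e3 : (y 0 * (star x ⬝ᵥ a)).re = ((starRingEnd ℂ) (y 0) * (star a ⬝ᵥ x)).re := by
    rw [← hconj,
      show y 0 * (starRingEnd ℂ) (star a ⬝ᵥ x)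
        = (starRingEnd ℂ) ((starRingEnd ℂ) (y 0) * (star a ⬝ᵥ x)) by
          rw [_root_.map_mul, Complex.conj_conj],
      Complex.conj_re]
  have e4 : star (y 0) * ((α:ℂ) * y 0) = ((α * Complex.normSq (y 0) : ℝ) : ℂ) := by
    rw [Complex.star_def]
    push_cast
    rw [show (starRingEnd ℂ) (y 0) * ((α:ℂ) * y 0) = (α:ℂ) * (y 0 * (starRingEnd ℂ) (y 0)) by ring,
      Complex.mul_conj]
  rw [e4]
  simp only [Complex.add_re, Complex.ofReal_re]
  rw [← hsy] at *
  rw [Complex.star_def] at *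
  rw [e3]
  simp only [qf]
  push_cast
  ring

lemma qf_smul_sub (Q P : Matrix ι ι ℂ) (l : ℝ) (x : ι → ℂ) :
    qf ((l:ℂ) • Q - P) x = l * qf Q x - qf P x := by
  simp only [qf, sub_mulVec, smul_mulVec, dotProduct_sub, dotProduct_smul,
    smul_eq_mul, Complex.sub_re, Complex.re_ofReal_mul]

theorem stmt_9 (n : ℕ) (hn : 1 ≤ n)
    (A : Matrix (Fin n) (Fin n) ℂ) (hA : A.IsHermitian) (a : Fin n → ℂ) (α : ℝ)
    (ε : ℝ) (hε : 0 < ε)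
    (hfeas : ∀ x : Fin n → ℂ, (∑ i, ‖x i‖ ^ 2) ≤ ε ^ 2 →
      (star x ⬝ᵥ (A *ᵥ x)).re + 2 * (star a ⬝ᵥ x).re + α ≤ 0) :
    ∃ l : ℝ, 0 ≤ l ∧
      ((l : ℂ) • sBlock (1 : Matrix (Fin n) (Fin n) ℂ) 0 (-(ε ^ 2))
        - sBlock A a α).PosSemidef := by
  set P : Matrix (Fin n ⊕ Fin 1) (Fin n ⊕ Fin 1) ℂ := sBlock A a α with hPdef
  set Q : Matrix (Fin n ⊕ Fin 1) (Fin n ⊕ Fin 1) ℂ :=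
    sBlock (1 : Matrix (Fin n) (Fin n) ℂ) 0 (-(ε ^ 2)) with hQdef
  have hermP : P.IsHermitian := sBlock_isHermitian A hA a α
  have hermQ : Q.IsHermitian := sBlock_isHermitian 1 Matrix.isHermitian_one 0 (-(ε^2))
  have hQf : ∀ v : Fin n ⊕ Fin 1 → ℂ,
      qf Q v = qf 1 (v ∘ Sum.inl) - ε^2 * Complex.normSq (v (Sum.inr 0)) := by
    intro v
    rw [hQdef, sBlock_qf]
    simp
    ring
  have hPf : ∀ v : Fin n ⊕ Fin 1 → ℂ,
      qf P v = qf A (v ∘ Sum.inl)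
        + 2 * ((starRingEnd ℂ) (v (Sum.inr 0)) * (star a ⬝ᵥ (v ∘ Sum.inl))).re
        + α * Complex.normSq (v (Sum.inr 0)) := fun v => by rw [hPdef, sBlock_qf]
  -- implication
  have himp : ∀ v : Fin n ⊕ Fin 1 → ℂ, qf Q v ≤ 0 → qf P v ≤ 0 := by
    intro v hQv
    rw [hQf] at hQv
    rw [hPf]
    set x : Fin n → ℂ := v ∘ Sum.inl with hxdef
    set t : ℂ := v (Sum.inr 0) with htdef
    by_cases hts : t = 0
    · -- t = 0 forces x = 0
      rw [hts] at hQv ⊢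
      simp only [Complex.normSq_zero, mul_zero, sub_zero] at hQv
      have hx0 : qf 1 x = 0 := le_antisymm hQv (qf_one_nonneg x)
      have hxz : x = 0 := by
        have hsum := qf_one x
        rw [hx0] at hsum
        funext i
        have hterm : Complex.normSq (x i) = 0 := by
          have h1 := Finset.single_le_sum
            (fun j (_ : j ∈ Finset.univ) => Complex.normSq_nonneg (x j)) (Finset.mem_univ i)
          linarith [Complex.normSq_nonneg (x i)]
        exact Complex.normSq_eq_zero.mp hterm
      rw [hxz, qf_zero]
      simp
    · -- scale down
      have htpos : 0 < Complex.normSq t := by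
        rcases lt_or_eq_of_le (Complex.normSq_nonneg t) with h | h
        · exact h
        · exact absurd (Complex.normSq_eq_zero.mp h.symm) hts
      set x' : Fin n → ℂ := t⁻¹ • x with hx'def
      have hxx' : x = t • x' := by
        rw [hx'def, smul_smul, mul_inv_cancel₀ hts, one_smul]
      have hsum : (∑ i, ‖x' i‖ ^ 2) ≤ ε ^ 2 := by
        have h1 : (∑ i, ‖x' i‖ ^ 2) = qf 1 x' := by
          rw [qf_one]
          exact Finset.sum_congr rfl fun i _ => (Complex.sq_norm (x' i))
        have h2 : qf 1 x' = (Complex.normSq t)⁻¹ * qf 1 x := by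
          rw [hx'def, qf_csmul, Complex.normSq_inv]
        rw [h1, h2]
        rw [inv_mul_le_iff₀ htpos]
        nlinarith
      have hf := hfeas x' hsum
      have hqA : qf A x = Complex.normSq t * qf A x' := by rw [hxx', qf_csmul]
      have hdot : star a ⬝ᵥ x = t * (star a ⬝ᵥ x') := by
        rw [hxx', dotProduct_smul, smul_eq_mul]
      have hre : ((starRingEnd ℂ) t * (star a ⬝ᵥ x)).re
          = Complex.normSq t * (star a ⬝ᵥ x').re := by
        rw [hdot, ← mul_assoc, mul_comm ((starRingEnd ℂ) t) t, Complex.mul_conj,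
          Complex.re_ofReal_mul]
      rw [hqA, hre]
      have key : qf A x' + 2 * (star a ⬝ᵥ x').re + α ≤ 0 := hf
      calc Complex.normSq t * qf A x' + 2 * (Complex.normSq t * (star a ⬝ᵥ x').re)
            + α * Complex.normSq t
          = Complex.normSq t * (qf A x' + 2 * (star a ⬝ᵥ x').re + α) := by ring
        _ ≤ 0 := mul_nonpos_iff.mpr (Or.inl ⟨htpos.le, key⟩)
  -- strictly feasible point
  set v0 : Fin n ⊕ Fin 1 → ℂ := Sum.elim 0 (fun _ => 1) with hv0def
  have hv01 : qf 1 v0 = 1 := by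
    rw [qf_one, Fintype.sum_sum_type]
    simp [hv0def]
  have hv0Q : qf Q v0 < 0 := by
    rw [hQf]
    have h1 : v0 ∘ Sum.inl = 0 := by funext i; rfl
    have h2 : v0 (Sum.inr 0) = 1 := rfl
    rw [h1, h2, qf_zero]
    simp only [Complex.normSq_one, mul_one, zero_sub, neg_neg, neg_lt_zero]
    positivity
  obtain ⟨l, hl0, hle⟩ := slem_core P Q hermP hermQ himp v0 hv01 hv0Q
  refine ⟨l, hl0, ?_⟩
  have hermM : ((l:ℂ) • Q - P).IsHermitian := by
    unfold Matrix.IsHermitian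
    rw [Matrix.conjTranspose_sub, Matrix.conjTranspose_smul, hermQ.eq, hermP.eq]
    congr 1
    rw [Complex.star_def, Complex.conj_ofReal]
  refine Matrix.PosSemidef.of_dotProduct_mulVec_nonneg hermM (fun x => ?_)
  set z : ℂ := star x ⬝ᵥ (((l:ℂ) • Q - P) *ᵥ x) with hz
  have him : z.im = 0 := by
    have hst : star z = z := by rw [hz]; exact star_form _ hermM x x
    rw [Complex.star_def] at hst
    exact Complex.conj_eq_iff_im.mp hst
  have hrege : 0 ≤ z.re := by
    have : z.re = qf ((l:ℂ) • Q - P) x := rfl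
    rw [this, qf_smul_sub]
    linarith [hle x]
  rw [Complex.le_def]
  constructor
  · simpa using hrege
  · simp [him]


end Aux
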